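/- Let 𝒫 be a partition of Fin n into nonempty blocks and ψ an n-qubit state. (i) If U is a unitary on the n-qubit space which factorizes as a tensor product U = ⊗_{B∈𝒫} U_B, with each U_B a unitary acting only on the qubits of block B, then Λ_max^𝒫(U ψ) = Λ_max^𝒫(ψ). (ii) If moreover U ψ = e ⊗ ψ̃, where e is a tensor product of single-qubit unit vectors on a subset D ⊆ Fin n and ψ̃ is a state on the qubits of Fin n ∖ D, then Λ_max^𝒫(ψ) = Λ_max^{𝒫'}(ψ̃), where 𝒫' = { B ∖ D : B ∈ 𝒫, B ∖ D ≠ ∅ } is the induced partition of Fin n ∖ D. (Content of Lemma 2: disentangling qubits by unitaries acting locally inside each block does not change the geometric entanglement of blocks.) -/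

import Mathlib

open scoped BigOperators
open scoped Classical

noncomputable section

namespace GeomEnt

/-- The ℓ² inner product of two amplitude functions on qubits indexed by `ι`. -/
def qInner {ι : Type} [Fintype ι] (φ ψ : (ι → ZMod 2) → ℂ) : ℂ :=
  ∑ x : ι → ZMod 2, (starRingEnd ℂ) (φ x) * ψ x

/-- A normalized state on qubits indexed by `ι`. -/
def IsState {ι : Type} [Fintype ι] (ψ : (ι → ZMod 2) → ℂ) : Prop :=
  ∑ x : ι → ZMod 2, ‖ψ x‖ ^ 2 = 1

/-- A product state with respect to a partition `P` of the qubits into blocks: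
each block carries a unit-norm amplitude function, and the global amplitude is the
product of the block amplitudes of the restrictions. -/
def IsBlockProductState {ι : Type} [Fintype ι] [DecidableEq ι]
    (P : Finpartition (Finset.univ : Finset ι)) (Φ : (ι → ZMod 2) → ℂ) : Prop :=
  ∃ φ : (B : Finset ι) → (({ a : ι // a ∈ B } → ZMod 2) → ℂ),
    (∀ B ∈ P.parts, ∑ y : { a : ι // a ∈ B } → ZMod 2, ‖φ B y‖ ^ 2 = 1) ∧
    ∀ x, Φ x = ∏ B ∈ P.parts, φ B (fun a => x a.1)

/-- Maximal overlap with `P`-product states. -/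
def LambdaMaxP {ι : Type} [Fintype ι] [DecidableEq ι]
    (P : Finpartition (Finset.univ : Finset ι)) (ψ : (ι → ZMod 2) → ℂ) : ℝ :=
  sSup { r : ℝ | ∃ Φ, IsBlockProductState P Φ ∧ r = ‖qInner Φ ψ‖ }

/-- Geometric entanglement of blocks. -/
def EGP {ι : Type} [Fintype ι] [DecidableEq ι]
    (P : Finpartition (Finset.univ : Finset ι)) (ψ : (ι → ZMod 2) → ℂ) : ℝ :=
  - Real.logb 2 (LambdaMaxP P ψ ^ 2)

set_option maxHeartbeats 2000000
set_option linter.unusedSectionVars false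

/-! ### instance bridging -/

lemma sum_univ_congr {α M : Type} [AddCommMonoid M] {i1 i2 : Fintype α} {f g : α → M}
    (h : ∀ a, f a = g a) :
    @Finset.sum α M _ (@Finset.univ α i1) f = @Finset.sum α M _ (@Finset.univ α i2) g := by
  cases Subsingleton.elim i1 i2
  exact Finset.sum_congr rfl fun a _ => h a

lemma prod_univ_congr {α M : Type} [CommMonoid M] {i1 i2 : Fintype α} {f g : α → M}
    (h : ∀ a, f a = g a) :
    @Finset.prod α M _ (@Finset.univ α i1) f = @Finset.prod α M _ (@Finset.univ α i2) g := by
  cases Subsingleton.elim i1 i2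
  exact Finset.prod_congr rfl fun a _ => h a

/-! ### sum/product factorization -/

lemma sum_prod_pi {J : Type} [Fintype J] {T : J → Type} [∀ j, Fintype (T j)]
    {R : Type} [CommSemiring R] (g : (j : J) → T j → R) :
    ∑ f : (∀ j, T j), ∏ j, g j (f j) = ∏ j, ∑ t, g j t := by
  classical
  rw [Finset.prod_univ_sum, Fintype.piFinset_univ]

def classEquiv {κ β α : Type} (c : κ → β) :
    (κ → α) ≃ ((b : β) → ({i : κ // c i = b} → α)) where
  toFun x := fun b i => x i.1
  invFun f := fun i => f (c i) ⟨i, rfl⟩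
  left_inv x := rfl
  right_inv f := by
    funext b i
    obtain ⟨i, hi⟩ := i
    subst hi
    rfl

lemma sum_prod_classifier {κ β α : Type} [Fintype κ] [Fintype β] [Fintype α]
    {R : Type} [CommSemiring R]
    (s : Finset β) (c : κ → β) (hc : ∀ i, c i ∈ s)
    (g : (b : β) → ({i : κ // c i = b} → α) → R) :
    ∑ x : κ → α, ∏ b ∈ s, g b (fun i => x i.1)
      = ∏ b ∈ s, ∑ w : {i : κ // c i = b} → α, g b w := by
  classical
  set g' : (b : β) → ({i : κ // c i = b} → α) → R :=
    fun b w => if b ∈ s then g b w else 1 with hg'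
  have hext : ∀ f : (b : β) → ({i : κ // c i = b} → α),
      ∏ b ∈ s, g b (f b) = ∏ b : β, g' b (f b) := by
    intro f
    rw [← Finset.prod_subset (Finset.subset_univ s)]
    · exact Finset.prod_congr rfl fun b hb => by simp [hg', hb]
    · intro b _ hb; simp [hg', hb]
  calc ∑ x : κ → α, ∏ b ∈ s, g b (fun i => x i.1)
      = ∑ x : κ → α, ∏ b : β, g' b ((classEquiv c) x b) := Finset.sum_congr rfl fun x _ => hext _
    _ = ∑ f : (b : β) → ({i : κ // c i = b} → α), ∏ b : β, g' b (f b) :=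
        Equiv.sum_comp (classEquiv c) (fun f => ∏ b : β, g' b (f b))
    _ = ∏ b : β, ∑ w : {i : κ // c i = b} → α, g' b w := sum_prod_pi g'
    _ = ∏ b ∈ s, ∑ w : {i : κ // c i = b} → α, g b w := by
        rw [← Finset.prod_subset (Finset.subset_univ s)]
        · exact Finset.prod_congr rfl fun b hb => Finset.sum_congr rfl fun w _ => by simp [hg', hb]
        · intro b _ hb
          haveI : IsEmpty {i : κ // c i = b} := ⟨fun i => hb (i.2 ▸ hc i.1)⟩
          simp [hg', hb]

lemma zmod2_sum {M : Type} [AddCommMonoid M] (h : ZMod 2 → M) :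
    ∑ t : ZMod 2, h t = h 0 + h 1 := by
  have huniv : (Finset.univ : Finset (ZMod 2)) = {0, 1} := by decide
  rw [huniv, Finset.sum_insert (by decide), Finset.sum_singleton]

/-! ### linear-algebra toolbox (classical instances) -/

section Toolbox
variable {κ : Type} [Fintype κ]

def applyM (N : (κ → ZMod 2) → (κ → ZMod 2) → ℂ) (f : (κ → ZMod 2) → ℂ) : (κ → ZMod 2) → ℂ :=
  fun x => ∑ y, N x y * f y

def applyDag (N : (κ → ZMod 2) → (κ → ZMod 2) → ℂ) (f : (κ → ZMod 2) → ℂ) : (κ → ZMod 2) → ℂ :=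
  fun x => ∑ y, (starRingEnd ℂ) (N y x) * f y

lemma qInner_dag_left (N : (κ → ZMod 2) → (κ → ZMod 2) → ℂ) (f g : (κ → ZMod 2) → ℂ) :
    qInner (applyDag N f) g = qInner f (applyM N g) := by
  unfold qInner applyDag applyM
  simp only [map_sum, map_mul, RingHomCompTriple.comp_apply, RingHom.id_apply,
    Complex.conj_conj, Finset.sum_mul, Finset.mul_sum]
  rw [Finset.sum_comm]
  exact Finset.sum_congr rfl fun y _ => Finset.sum_congr rfl fun x _ => by ring

lemma dag_apply (N : (κ → ZMod 2) → (κ → ZMod 2) → ℂ)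
    (hN : ∀ y z, (∑ x : κ → ZMod 2, (starRingEnd ℂ) (N x y) * N x z)
      = if y = z then 1 else 0)
    (f : (κ → ZMod 2) → ℂ) : applyDag N (applyM N f) = f := by
  funext x
  unfold applyDag applyM
  simp only [Finset.mul_sum]
  rw [Finset.sum_comm]
  have : ∀ z, ∑ y, (starRingEnd ℂ) (N y x) * (N y z * f z)
      = (if x = z then 1 else 0) * f z := by
    intro z
    rw [← hN x z, Finset.sum_mul]
    exact Finset.sum_congr rfl fun y _ => by ring
  simp only [this, ite_mul, one_mul, zero_mul]
  simp

lemma qInner_apply_apply (N : (κ → ZMod 2) → (κ → ZMod 2) → ℂ)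
    (hN : ∀ y z, (∑ x : κ → ZMod 2, (starRingEnd ℂ) (N x y) * N x z)
      = if y = z then 1 else 0)
    (f g : (κ → ZMod 2) → ℂ) :
    qInner (applyM N f) (applyM N g) = qInner f g := by
  rw [← qInner_dag_left, dag_apply N hN]

lemma qInner_self (f : (κ → ZMod 2) → ℂ) :
    qInner f f = ((∑ x : κ → ZMod 2, ‖f x‖ ^ 2 : ℝ) : ℂ) := by
  unfold qInner
  push_cast
  exact Finset.sum_congr rfl fun x _ => by
    rw [← Complex.ofReal_pow, Complex.sq_norm, Complex.normSq_eq_conj_mul_self]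

lemma abs_qInner_le (f g : (κ → ZMod 2) → ℂ) :
    ‖qInner f g‖ ≤
      Real.sqrt (∑ x : κ → ZMod 2, ‖f x‖ ^ 2) *
      Real.sqrt (∑ x : κ → ZMod 2, ‖g x‖ ^ 2) := by
  have h := norm_inner_le_norm (𝕜 := ℂ) (E := EuclideanSpace ℂ (κ → ZMod 2)) (WithLp.toLp 2 f) (WithLp.toLp 2 g)
  rw [EuclideanSpace.norm_eq, EuclideanSpace.norm_eq] at h
  simpa [qInner, PiLp.inner_apply, RCLike.inner_apply, mul_comm] using h

end Toolbox

/-! ### unitarity extraction -/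

lemma unitary_ortho {n : Type} [Fintype n] [DecidableEq n] (N : n → n → ℂ)
    (hN : Matrix.of N ∈ Matrix.unitaryGroup n ℂ) :
    (∀ y z, (∑ x, (starRingEnd ℂ) (N x y) * N x z) = if y = z then 1 else 0) ∧
    (∀ w z, (∑ u, N w u * (starRingEnd ℂ) (N z u)) = if w = z then 1 else 0) := by
  obtain ⟨h1, h2⟩ := (Unitary.mem_iff).mp hN
  constructor
  · intro y z
    have h : (star (Matrix.of N) * Matrix.of N) y z = (1 : Matrix n n ℂ) y z := by rw [h1]
    simpa [Matrix.mul_apply, Matrix.star_apply, Matrix.one_apply, Matrix.of_apply,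
      Complex.star_def] using h
  · intro w z
    have h : (Matrix.of N * star (Matrix.of N)) w z = (1 : Matrix n n ℂ) w z := by rw [h2]
    simpa [Matrix.mul_apply, Matrix.star_apply, Matrix.one_apply, Matrix.of_apply,
      Complex.star_def] using h

/-! ### partition utilities -/

section Partition
variable {ι : Type} [Fintype ι] [DecidableEq ι] (P : Finpartition (Finset.univ : Finset ι))

def fiberEquiv {B : Finset ι} (hB : B ∈ P.parts) :
    {i : ι // P.part i = B} ≃ {a : ι // a ∈ B} where
  toFun i := ⟨i.1, by have := P.mem_part (Finset.mem_univ i.1); rwa [i.2] at this⟩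
  invFun a := ⟨a.1, P.part_eq_of_mem hB a.2⟩
  left_inv i := rfl
  right_inv a := rfl

lemma sum_prod_partition {R : Type} [CommSemiring R]
    (G : (B : Finset ι) → ({a : ι // a ∈ B} → ZMod 2) → R) :
    ∑ x : ι → ZMod 2, ∏ B ∈ P.parts, G B (fun a => x a.1)
      = ∏ B ∈ P.parts, ∑ w : {a : ι // a ∈ B} → ZMod 2, G B w := by
  set g : (B : Finset ι) → ({i : ι // P.part i = B} → ZMod 2) → R :=
    fun B w => if hB : B ∈ P.parts then
      G B (fun a => w ((fiberEquiv P hB).symm a)) else 1 with hg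
  have hc : ∀ i : ι, P.part i ∈ P.parts := fun i => P.part_mem.mpr (Finset.mem_univ i)
  have key := sum_prod_classifier (α := ZMod 2) P.parts (fun i => P.part i) hc g
  have hL : ∀ x : ι → ZMod 2, ∀ B ∈ P.parts,
      g B (fun i : {i : ι // P.part i = B} => x i.1) = G B (fun a => x a.1) := by
    intro x B hB
    simp only [hg, dif_pos hB]
    rfl
  have hR : ∀ B ∈ P.parts,
      (∑ w : {i : ι // P.part i = B} → ZMod 2, g B w)
        = ∑ w : {a : ι // a ∈ B} → ZMod 2, G B w := by
    intro B hB
    have e1 : (∑ w : {i : ι // P.part i = B} → ZMod 2, g B w)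
        = ∑ w : {i : ι // P.part i = B} → ZMod 2,
            G B (fun a => w ((fiberEquiv P hB).symm a)) :=
      Finset.sum_congr rfl fun w _ => by simp only [hg, dif_pos hB]
    rw [e1]
    exact Equiv.sum_comp ((fiberEquiv P hB).symm.arrowCongr (Equiv.refl (ZMod 2))).symm
      (fun w : {a : ι // a ∈ B} → ZMod 2 => G B w)
  have step : (∑ x : ι → ZMod 2, ∏ B ∈ P.parts, g B (fun i => x i.1))
      = ∏ B ∈ P.parts, ∑ w : {i : ι // P.part i = B} → ZMod 2, g B w := by
    refine Eq.trans (sum_univ_congr fun x => rfl) (key.trans ?_)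
    exact Finset.prod_congr rfl fun B _ => sum_univ_congr fun w => rfl
  calc ∑ x : ι → ZMod 2, ∏ B ∈ P.parts, G B (fun a => x a.1)
      = ∑ x : ι → ZMod 2, ∏ B ∈ P.parts, g B (fun i => x i.1) :=
        Finset.sum_congr rfl fun x _ =>
          (Finset.prod_congr rfl fun B hB => (hL x B hB).symm)
    _ = ∏ B ∈ P.parts, ∑ w : {i : ι // P.part i = B} → ZMod 2, g B w := step
    _ = ∏ B ∈ P.parts, ∑ w : {a : ι // a ∈ B} → ZMod 2, G B w :=
        Finset.prod_congr rfl hR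

/-- A block-product state is normalized. -/
lemma bps_isState {Φ : (ι → ZMod 2) → ℂ} (hΦ : IsBlockProductState P Φ) : IsState Φ := by
  obtain ⟨φ, hnorm, hform⟩ := hΦ
  have key := sum_prod_partition P (fun B w => ‖φ B w‖ ^ 2)
  have main : (∑ x : ι → ZMod 2, ‖Φ x‖ ^ 2 : ℝ) = 1 :=
    calc ∑ x : ι → ZMod 2, ‖Φ x‖ ^ 2
        = ∑ x : ι → ZMod 2, ∏ B ∈ P.parts, ‖φ B (fun a => x a.1)‖ ^ 2 := by
          refine Finset.sum_congr rfl fun x _ => ?_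
          rw [hform x, norm_prod, ← Finset.prod_pow]
      _ = ∏ B ∈ P.parts, ∑ w : {a : ι // a ∈ B} → ZMod 2, ‖φ B w‖ ^ 2 := key
      _ = 1 := by
          rw [Finset.prod_congr rfl hnorm, Finset.prod_const_one]
  unfold IsState
  exact (sum_univ_congr fun x => rfl).trans main

/-- The delta state is a block-product state. -/
lemma bps_exists : ∃ Φ, IsBlockProductState P Φ := by
  refine ⟨fun x => ∏ B ∈ P.parts,
    (if (fun a : {a : ι // a ∈ B} => x a.1) = (fun _ => 0) then (1:ℂ) else 0),
    ⟨fun B => fun w => if w = (fun _ => 0) then (1:ℂ) else 0, fun B hB => ?_, fun x => rfl⟩⟩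
  have h : ∀ w : {a : ι // a ∈ B} → ZMod 2,
      ‖if w = (fun _ => 0) then (1:ℂ) else 0‖ ^ 2
        = if w = (fun _ => 0) then (1:ℝ) else 0 := by
    intro w; split <;> simp
  rw [Finset.sum_congr rfl fun w _ => h w]
  simp

lemma lambda_set_nonempty (χ : (ι → ZMod 2) → ℂ) :
    { r : ℝ | ∃ Φ, IsBlockProductState P Φ ∧ r = ‖qInner Φ χ‖ }.Nonempty := by
  obtain ⟨Φ, hΦ⟩ := bps_exists P
  exact ⟨_, Φ, hΦ, rfl⟩

lemma lambda_set_bddAbove (χ : (ι → ZMod 2) → ℂ) :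
    BddAbove { r : ℝ | ∃ Φ, IsBlockProductState P Φ ∧ r = ‖qInner Φ χ‖ } := by
  refine ⟨Real.sqrt (∑ x : ι → ZMod 2, ‖χ x‖ ^ 2), ?_⟩
  rintro r ⟨Φ, hΦ, rfl⟩
  have hst : IsState Φ := bps_isState P hΦ
  have h := abs_qInner_le Φ χ
  have h1 := hst
  unfold IsState at h1
  rw [h1, Real.sqrt_one, one_mul] at h
  exact h.trans (le_of_eq (congrArg Real.sqrt (sum_univ_congr fun x => rfl)))

lemma lambda_nonneg (χ : (ι → ZMod 2) → ℂ) : 0 ≤ LambdaMaxP P χ := by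
  obtain ⟨r, hr⟩ := lambda_set_nonempty P χ
  obtain ⟨Φ, hΦ, rfl⟩ := hr
  exact le_trans (norm_nonneg _) (le_csSup (lambda_set_bddAbove P χ) ⟨Φ, hΦ, rfl⟩)

end Partition
section PartI
variable {ι : Type} [Fintype ι] [DecidableEq ι] (P : Finpartition (Finset.univ : Finset ι))

lemma bps_apply (N : (ι → ZMod 2) → (ι → ZMod 2) → ℂ)
    (V : (B : Finset ι) → ({a : ι // a ∈ B} → ZMod 2) → ({a : ι // a ∈ B} → ZMod 2) → ℂ)
    (hfact : ∀ x y, N x y = ∏ B ∈ P.parts, V B (fun a => x a.1) (fun a => y a.1))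
    (hV : ∀ B ∈ P.parts, ∀ w z,
      (∑ u : {a : ι // a ∈ B} → ZMod 2, (starRingEnd ℂ) (V B u w) * V B u z)
        = if w = z then 1 else 0)
    {Φ : (ι → ZMod 2) → ℂ} (hΦ : IsBlockProductState P Φ) :
    IsBlockProductState P (applyM N Φ) := by
  obtain ⟨φ, hnorm, hform⟩ := hΦ
  refine ⟨fun B => applyM (V B) (φ B), fun B hB => ?_, fun x => ?_⟩
  · have hq : qInner (applyM (V B) (φ B)) (applyM (V B) (φ B)) = qInner (φ B) (φ B) :=
      qInner_apply_apply (V B)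
        (fun w z => (sum_univ_congr fun u => rfl).trans (hV B hB w z)) (φ B) (φ B)
    rw [qInner_self, qInner_self] at hq
    have h2 := Complex.ofReal_inj.mp hq
    exact (((sum_univ_congr fun y => rfl).trans h2).trans
      (sum_univ_congr fun y => rfl)).trans (hnorm B hB)
  · calc applyM N Φ x
        = ∑ y : ι → ZMod 2, ∏ B ∈ P.parts,
            (V B (fun a => x a.1) (fun a => y a.1) * φ B (fun a => y a.1)) := by
          refine sum_univ_congr fun y => ?_
          rw [hfact, hform, ← Finset.prod_mul_distrib]
      _ = ∏ B ∈ P.parts, ∑ w : {a : ι // a ∈ B} → ZMod 2,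
            (V B (fun a => x a.1) w * φ B w) :=
          sum_prod_partition P (fun B w => V B (fun a => x a.1) w * φ B w)
      _ = ∏ B ∈ P.parts, applyM (V B) (φ B) (fun a => x a.1) :=
          Finset.prod_congr rfl fun B _ => sum_univ_congr fun w => rfl

lemma lambda_unitary
    (ψ : (ι → ZMod 2) → ℂ)
    (M : (ι → ZMod 2) → (ι → ZMod 2) → ℂ)
    (hM : Matrix.of M ∈ Matrix.unitaryGroup (ι → ZMod 2) ℂ)
    (UB : (B : Finset ι) → ({ a : ι // a ∈ B } → ZMod 2) → ({ a : ι // a ∈ B } → ZMod 2) → ℂ)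
    (hUB : ∀ B ∈ P.parts,
      Matrix.of (UB B) ∈ Matrix.unitaryGroup ({ a : ι // a ∈ B } → ZMod 2) ℂ)
    (hfact : ∀ x y, M x y = ∏ B ∈ P.parts, UB B (fun a => x a.1) (fun a => y a.1))
    (Uψ : (ι → ZMod 2) → ℂ)
    (hUψ : ∀ x, Uψ x = ∑ y : ι → ZMod 2, M x y * ψ y) :
    LambdaMaxP P Uψ = LambdaMaxP P ψ := by
  obtain ⟨hM1, hM2⟩ := unitary_ortho M hM
  have hUψ' : Uψ = applyM M ψ :=
    funext fun x => (hUψ x).trans ((sum_univ_congr fun y => rfl).symm.trans rfl).symm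
  have hsets : { r : ℝ | ∃ Φ, IsBlockProductState P Φ ∧ r = ‖qInner Φ Uψ‖ }
      = { r : ℝ | ∃ Φ, IsBlockProductState P Φ ∧ r = ‖qInner Φ ψ‖ } := by
    ext r
    constructor
    · rintro ⟨Φ, hΦ, rfl⟩
      refine ⟨applyDag M Φ, ?_, ?_⟩
      · have : applyDag M Φ = applyM (fun x y => (starRingEnd ℂ) (M y x)) Φ := rfl
        rw [this]
        refine bps_apply P _ (fun B w z => (starRingEnd ℂ) (UB B z w)) ?_ ?_ hΦ
        · intro x y
          rw [hfact y x, map_prod]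
        · intro B hB w z
          have h2 := (unitary_ortho (UB B) (hUB B hB)).2 w z
          refine Eq.trans ?_ h2
          exact Finset.sum_congr rfl fun u _ => by
            simp [RingHomCompTriple.comp_apply, Complex.conj_conj]
      · rw [qInner_dag_left M Φ ψ, ← hUψ']
    · rintro ⟨Φ, hΦ, rfl⟩
      refine ⟨applyM M Φ, ?_, ?_⟩
      · refine bps_apply P M UB hfact ?_ hΦ
        intro B hB w z
        exact (unitary_ortho (UB B) (hUB B hB)).1 w z
      · rw [hUψ', qInner_apply_apply M
          (fun y z => (sum_univ_congr fun x => rfl).trans (hM1 y z))]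
  unfold LambdaMaxP
  rw [hsets]

end PartI
/-! ### part (ii) infrastructure -/

lemma eps_conj_sum {J : Type} [Fintype J] (ee : J → ZMod 2 → ℂ)
    (hee : ∀ j, ‖ee j 0‖ ^ 2 + ‖ee j 1‖ ^ 2 = 1) :
    ∑ w : J → ZMod 2, ∏ j, ((starRingEnd ℂ) (ee j (w j)) * ee j (w j)) = 1 := by
  rw [sum_prod_pi (fun j t => (starRingEnd ℂ) (ee j t) * ee j t)]
  have hj : ∀ j : J, (∑ t : ZMod 2, (starRingEnd ℂ) (ee j t) * ee j t) = 1 := by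
    intro j
    rw [zmod2_sum (fun t => (starRingEnd ℂ) (ee j t) * ee j t)]
    have hc : ∀ z : ℂ, (starRingEnd ℂ) z * z = ((‖z‖ ^ 2 : ℝ) : ℂ) := fun z => by
      rw [Complex.sq_norm, Complex.normSq_eq_conj_mul_self]
    rw [hc, hc, ← Complex.ofReal_add, hee j, Complex.ofReal_one]
  rw [Finset.prod_congr rfl fun j _ => hj j, Finset.prod_const_one]

lemma eps_sq_sum {J : Type} [Fintype J] (ee : J → ZMod 2 → ℂ)
    (hee : ∀ j, ‖ee j 0‖ ^ 2 + ‖ee j 1‖ ^ 2 = 1) :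
    ∑ w : J → ZMod 2, ∏ j, ‖ee j (w j)‖ ^ 2 = 1 := by
  rw [sum_prod_pi (fun j t => ‖ee j t‖ ^ 2)]
  have hj : ∀ j : J, (∑ t : ZMod 2, ‖ee j t‖ ^ 2) = 1 := by
    intro j
    rw [zmod2_sum (fun t => ‖ee j t‖ ^ 2)]
    exact hee j
  rw [Finset.prod_congr rfl fun j _ => hj j, Finset.prod_const_one]

section PartII
variable {ι : Type} [Fintype ι] [DecidableEq ι] (P : Finpartition (Finset.univ : Finset ι))
  (D : Finset ι)

def glue (u : {a : ι // a ∈ D} → ZMod 2) (v : {a : ι // a ∉ D} → ZMod 2) : ι → ZMod 2 :=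
  fun i => if h : i ∈ D then u ⟨i, h⟩ else v ⟨i, h⟩

def splitE : (ι → ZMod 2) ≃ ({a : ι // a ∈ D} → ZMod 2) × ({a : ι // a ∉ D} → ZMod 2) where
  toFun x := (fun a => x a.1, fun a => x a.1)
  invFun p := glue D p.1 p.2
  left_inv x := by
    funext i
    by_cases h : i ∈ D <;> simp [glue, h]
  right_inv p := by
    refine Prod.ext ?_ ?_ <;> funext a
    · show glue D p.1 p.2 a.1 = p.1 a
      rw [glue, dif_pos a.2]
    · show glue D p.1 p.2 a.1 = p.2 a
      rw [glue, dif_neg a.2]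

lemma glue_restrD (u : {a : ι // a ∈ D} → ZMod 2) (v : {a : ι // a ∉ D} → ZMod 2) :
    (fun a : {a : ι // a ∈ D} => glue D u v a.1) = u := by
  funext a; rw [glue, dif_pos a.2]

lemma glue_restrDc (u : {a : ι // a ∈ D} → ZMod 2) (v : {a : ι // a ∉ D} → ZMod 2) :
    (fun a : {a : ι // a ∉ D} => glue D u v a.1) = v := by
  funext a; rw [glue, dif_neg a.2]

lemma sum_split {M : Type} [AddCommMonoid M] (F : (ι → ZMod 2) → M) :
    ∑ x : ι → ZMod 2, F x = ∑ u : {a : ι // a ∈ D} → ZMod 2,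
      ∑ v : {a : ι // a ∉ D} → ZMod 2, F (glue D u v) := by
  rw [← Equiv.sum_comp (splitE D).symm F, Fintype.sum_prod_type]
  rfl

variable {B : Finset ι}

lemma mem_of_fiber (i : {i : {a : ι // a ∈ D} // P.part i.1 = B}) : i.1.1 ∈ B := by
  have := P.mem_part (Finset.mem_univ i.1.1)
  rwa [i.2] at this

def glueB (hB : B ∈ P.parts)
    (w : {i : {a : ι // a ∈ D} // P.part i.1 = B} → ZMod 2)
    (z : {t : {a : ι // a ∉ D} // t ∈ Finset.subtype (fun a => a ∉ D) B} → ZMod 2) :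
    {a : ι // a ∈ B} → ZMod 2 :=
  fun a => if h : a.1 ∈ D then w ⟨⟨a.1, h⟩, P.part_eq_of_mem hB a.2⟩
    else z ⟨⟨a.1, h⟩, Finset.mem_subtype.mpr a.2⟩

def eGlueB (hB : B ∈ P.parts) :
    (({i : {a : ι // a ∈ D} // P.part i.1 = B} → ZMod 2) ×
      ({t : {a : ι // a ∉ D} // t ∈ Finset.subtype (fun a => a ∉ D) B} → ZMod 2))
    ≃ ({a : ι // a ∈ B} → ZMod 2) where
  toFun p := glueB P D hB p.1 p.2
  invFun y := (fun i => y ⟨i.1.1, mem_of_fiber P D i⟩,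
    fun t => y ⟨t.1.1, Finset.mem_subtype.mp t.2⟩)
  left_inv p := by
    refine Prod.ext ?_ ?_
    · funext i
      show glueB P D hB p.1 p.2 ⟨i.1.1, _⟩ = p.1 i
      rw [glueB, dif_pos i.1.2]
    · funext t
      show glueB P D hB p.1 p.2 ⟨t.1.1, _⟩ = p.2 t
      rw [glueB, dif_neg t.1.2]
  right_inv y := by
    funext a
    by_cases h : a.1 ∈ D
    · show glueB P D hB _ _ a = y a
      rw [glueB, dif_pos h]
    · show glueB P D hB _ _ a = y a
      rw [glueB, dif_neg h]

lemma sum_over_block {M : Type} [AddCommMonoid M] (hB : B ∈ P.parts)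
    (F : ({a : ι // a ∈ B} → ZMod 2) → M) :
    ∑ y : {a : ι // a ∈ B} → ZMod 2, F y
      = ∑ w : {i : {a : ι // a ∈ D} // P.part i.1 = B} → ZMod 2,
          ∑ z : {t : {a : ι // a ∉ D} // t ∈ Finset.subtype (fun a => a ∉ D) B} → ZMod 2,
            F (glueB P D hB w z) := by
  rw [← Equiv.sum_comp (eGlueB P D hB) F, Fintype.sum_prod_type]
  rfl

lemma subtype_injOn : ∀ B₁ ∈ P.parts, ∀ B₂ ∈ P.parts,
    (Finset.subtype (fun a => a ∉ D) B₁).Nonempty →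
    Finset.subtype (fun a => a ∉ D) B₁ = Finset.subtype (fun a => a ∉ D) B₂ → B₁ = B₂ := by
  intro B₁ h₁ B₂ h₂ hne heq
  obtain ⟨t, ht⟩ := hne
  have ht1 : t.1 ∈ B₁ := Finset.mem_subtype.mp ht
  have ht2 : t.1 ∈ B₂ := Finset.mem_subtype.mp (heq ▸ ht)
  exact P.eq_of_mem_parts h₁ h₂ ht1 ht2

end PartII

section PartII2
variable {ι : Type} [Fintype ι] [DecidableEq ι] (P : Finpartition (Finset.univ : Finset ι))
  (D : Finset ι)

lemma prod_fiber_eps {M : Type} [CommMonoid M] (h : {a : ι // a ∈ D} → M) :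
    ∏ B ∈ P.parts, ∏ i : {i : {a : ι // a ∈ D} // P.part i.1 = B}, h i.1
      = ∏ i : {a : ι // a ∈ D}, h i := by
  have h1 : ∀ B ∈ P.parts, (∏ i : {i : {a : ι // a ∈ D} // P.part i.1 = B}, h i.1)
      = ∏ i ∈ Finset.univ.filter (fun i : {a : ι // a ∈ D} => P.part i.1 = B), h i := by
    intro B _
    exact (Finset.prod_subtype _ (fun i => by simp) h).symm
  rw [Finset.prod_congr rfl h1]
  exact Finset.prod_fiberwise_of_maps_to (fun i _ => P.part_mem.mpr (Finset.mem_univ i.1)) h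

lemma part2_ge
    (P' : Finpartition (Finset.univ : Finset {a : ι // a ∉ D}))
    (hP' : P'.parts = (P.parts.image (fun B => Finset.subtype (fun a => a ∉ D) B)).filter
      (fun s => s.Nonempty))
    (ε : {a : ι // a ∈ D} → ZMod 2 → ℂ)
    (hε : ∀ i, ‖ε i 0‖ ^ 2 + ‖ε i 1‖ ^ 2 = 1)
    (e : ({a : ι // a ∈ D} → ZMod 2) → ℂ) (he : ∀ y, e y = ∏ i, ε i (y i))
    (ψt : ({a : ι // a ∉ D} → ZMod 2) → ℂ)
    (χ : (ι → ZMod 2) → ℂ)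
    (hχ : ∀ x, χ x = e (fun a => x a.1) * ψt (fun a => x a.1))
    (r : ℝ)
    (hr : r ∈ { s : ℝ | ∃ Φ', IsBlockProductState P' Φ' ∧ s = ‖qInner Φ' ψt‖ }) :
    r ∈ { s : ℝ | ∃ Φ, IsBlockProductState P Φ ∧ s = ‖qInner Φ χ‖ } := by
  obtain ⟨Φ', ⟨φ', hn', hform'⟩, rfl⟩ := hr
  set ρ : (B : Finset ι) →
      ({t : {a : ι // a ∉ D} // t ∈ Finset.subtype (fun a => a ∉ D) B} → ZMod 2) → ℂ :=
    fun B z => if h : (Finset.subtype (fun a => a ∉ D) B).Nonempty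
      then φ' (Finset.subtype (fun a => a ∉ D) B) z else 1 with hρ
  set φ2 : (B : Finset ι) → (({a : ι // a ∈ B} → ZMod 2) → ℂ) :=
    fun B y => (∏ i : {i : {a : ι // a ∈ D} // P.part i.1 = B},
        ε i.1 (y ⟨i.1.1, mem_of_fiber P D i⟩))
      * ρ B (fun t => y ⟨t.1.1, Finset.mem_subtype.mp t.2⟩) with hφ2
  -- evaluation of φ2 on glued configurations
  have hev : ∀ {B : Finset ι} (hB : B ∈ P.parts)
      (w : {i : {a : ι // a ∈ D} // P.part i.1 = B} → ZMod 2)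
      (z : {t : {a : ι // a ∉ D} // t ∈ Finset.subtype (fun a => a ∉ D) B} → ZMod 2),
      φ2 B (glueB P D hB w z) = (∏ i, ε i.1 (w i)) * ρ B z := by
    intro B hB w z
    have h1 : ∀ i : {i : {a : ι // a ∈ D} // P.part i.1 = B},
        glueB P D hB w z ⟨i.1.1, mem_of_fiber P D i⟩ = w i := by
      intro i
      rw [glueB, dif_pos i.1.2]
    have h2 : (fun t : {t : {a : ι // a ∉ D} // t ∈ Finset.subtype (fun a => a ∉ D) B} =>
        glueB P D hB w z ⟨t.1.1, Finset.mem_subtype.mp t.2⟩) = z := by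
      funext t
      rw [glueB, dif_neg t.1.2]
    show (∏ i : {i : {a : ι // a ∈ D} // P.part i.1 = B},
        ε i.1 (glueB P D hB w z ⟨i.1.1, mem_of_fiber P D i⟩))
      * ρ B (fun t => glueB P D hB w z ⟨t.1.1, Finset.mem_subtype.mp t.2⟩)
      = (∏ i, ε i.1 (w i)) * ρ B z
    rw [h2]
    exact congrArg (fun t => t * ρ B z)
      (Finset.prod_congr rfl fun i _ => by rw [h1 i])
  -- norms
  have hnorm : ∀ B ∈ P.parts,
      ∑ y : {a : ι // a ∈ B} → ZMod 2, ‖φ2 B y‖ ^ 2 = 1 := by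
    intro B hB
    have hsummand : ∀ w z, ‖φ2 B (glueB P D hB w z)‖ ^ 2
        = (∏ i, ‖ε i.1 (w i)‖ ^ 2) * ‖ρ B z‖ ^ 2 := by
      intro w z
      rw [hev hB w z, norm_mul, norm_prod, mul_pow, ← Finset.prod_pow]
    have hmain := (sum_over_block P D hB (fun y => ‖φ2 B y‖ ^ 2)).trans
      ((Finset.sum_congr rfl fun w _ => Finset.sum_congr rfl fun z _ => hsummand w z).trans
        (Finset.sum_mul_sum Finset.univ Finset.univ
          (fun w : {i : {a : ι // a ∈ D} // P.part i.1 = B} → ZMod 2 =>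
            ∏ i, ‖ε i.1 (w i)‖ ^ 2)
          (fun z : {t : {a : ι // a ∉ D} // t ∈ Finset.subtype (fun a => a ∉ D) B} → ZMod 2 =>
            ‖ρ B z‖ ^ 2)).symm)
    rw [hmain]
    have hw : (∑ w : {i : {a : ι // a ∈ D} // P.part i.1 = B} → ZMod 2,
        ∏ i, ‖ε i.1 (w i)‖ ^ 2) = 1 := by
      have h1 := eps_sq_sum (J := {i : {a : ι // a ∈ D} // P.part i.1 = B})
        (fun i => ε i.1) (fun i => hε i.1)
      refine Eq.trans ?_ h1
      exact sum_univ_congr fun w => prod_univ_congr fun i => rfl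
    have hz : (∑ z : {t : {a : ι // a ∉ D} // t ∈ Finset.subtype (fun a => a ∉ D) B} → ZMod 2,
        ‖ρ B z‖ ^ 2) = 1 := by
      by_cases h : (Finset.subtype (fun a => a ∉ D) B).Nonempty
      · have hmem : Finset.subtype (fun a => a ∉ D) B ∈ P'.parts := by
          rw [hP']
          exact Finset.mem_filter.mpr ⟨Finset.mem_image_of_mem _ hB, h⟩
        have := hn' _ hmem
        calc ∑ z : {t : {a : ι // a ∉ D} // t ∈ Finset.subtype (fun a => a ∉ D) B} → ZMod 2,
            ‖ρ B z‖ ^ 2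
            = ∑ z : {t : {a : ι // a ∉ D} // t ∈ Finset.subtype (fun a => a ∉ D) B} → ZMod 2,
              ‖φ' (Finset.subtype (fun a => a ∉ D) B) z‖ ^ 2 := by
              refine Finset.sum_congr rfl fun z _ => ?_
              rw [hρ]
              simp only [dif_pos h]
          _ = 1 := this
      · haveI : IsEmpty {t : {a : ι // a ∉ D} // t ∈ Finset.subtype (fun a => a ∉ D) B} :=
          ⟨fun t => h ⟨t.1, t.2⟩⟩
        have hone : ∀ z : {t : {a : ι // a ∉ D} //
            t ∈ Finset.subtype (fun a => a ∉ D) B} → ZMod 2,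
            ‖ρ B z‖ ^ 2 = 1 := by
          intro z
          rw [hρ]
          simp only [dif_neg h]
          simp
        rw [Finset.sum_congr rfl fun z _ => hone z, Finset.sum_const, nsmul_eq_mul, mul_one]
        norm_cast
        rw [Finset.card_univ]
        exact Fintype.card_unique
    rw [hw, hz, mul_one]
  -- pointwise factorization of the assembled state
  have hrestr : ∀ (B : Finset ι) (hB : B ∈ P.parts) u v,
      (fun a : {a : ι // a ∈ B} => glue D u v a.1)
        = glueB P D hB (fun i => u i.1) (fun t => v t.1) := by
    intro B hB u v
    funext a
    by_cases h : a.1 ∈ D <;> simp [glue, glueB, h]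
  have hsecond : ∀ v : {a : ι // a ∉ D} → ZMod 2,
      (∏ B ∈ P.parts, ρ B (fun t => v t.1)) = Φ' v := by
    intro v
    rw [← Finset.prod_filter_mul_prod_filter_not P.parts
      (fun B => (Finset.subtype (fun a => a ∉ D) B).Nonempty)]
    have hzero : (∏ B ∈ P.parts.filter
        (fun B => ¬ (Finset.subtype (fun a => a ∉ D) B).Nonempty), ρ B (fun t => v t.1)) = 1 := by
      refine Finset.prod_eq_one fun B hB => ?_
      rw [hρ]
      simp only [dif_neg (Finset.mem_filter.mp hB).2]
    have hpos : (∏ B ∈ P.parts.filter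
        (fun B => (Finset.subtype (fun a => a ∉ D) B).Nonempty), ρ B (fun t => v t.1))
        = ∏ B ∈ P.parts.filter
          (fun B => (Finset.subtype (fun a => a ∉ D) B).Nonempty),
          φ' (Finset.subtype (fun a => a ∉ D) B) (fun t => v t.1) := by
      refine Finset.prod_congr rfl fun B hB => ?_
      rw [hρ]
      simp only [dif_pos (Finset.mem_filter.mp hB).2]
    rw [hzero, hpos, mul_one]
    have himg : (P.parts.filter
        (fun B => (Finset.subtype (fun a => a ∉ D) B).Nonempty)).image
          (fun B => Finset.subtype (fun a => a ∉ D) B) = P'.parts := by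
      rw [hP', Finset.filter_image]
    have hinj : ∀ B₁ ∈ P.parts.filter
          (fun B => (Finset.subtype (fun a => a ∉ D) B).Nonempty),
        ∀ B₂ ∈ P.parts.filter
          (fun B => (Finset.subtype (fun a => a ∉ D) B).Nonempty),
        Finset.subtype (fun a => a ∉ D) B₁ = Finset.subtype (fun a => a ∉ D) B₂ → B₁ = B₂ := by
      intro B₁ h₁ B₂ h₂ heq
      have h₁' := Finset.mem_filter.mp h₁
      have h₂' := Finset.mem_filter.mp h₂
      exact subtype_injOn P D B₁ h₁'.1 B₂ h₂'.1 h₁'.2 heq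
    calc (∏ B ∈ P.parts.filter
          (fun B => (Finset.subtype (fun a => a ∉ D) B).Nonempty),
          φ' (Finset.subtype (fun a => a ∉ D) B) (fun t => v t.1))
        = ∏ B' ∈ (P.parts.filter
            (fun B => (Finset.subtype (fun a => a ∉ D) B).Nonempty)).image
              (fun B => Finset.subtype (fun a => a ∉ D) B),
            φ' B' (fun t => v t.1) :=
          (Finset.prod_image (f := fun B' : Finset {a : ι // a ∉ D} =>
            φ' B' (fun t => v t.1)) hinj).symm
      _ = ∏ B' ∈ P'.parts, φ' B' (fun t => v t.1) := by rw [himg]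
      _ = Φ' v := (hform' v).symm
  have hpoint : ∀ u v, (∏ B ∈ P.parts, φ2 B (fun a => glue D u v a.1)) = e u * Φ' v := by
    intro u v
    have : ∀ B ∈ P.parts, φ2 B (fun a => glue D u v a.1)
        = (∏ i : {i : {a : ι // a ∈ D} // P.part i.1 = B}, ε i.1 (u i.1))
          * ρ B (fun t => v t.1) := by
      intro B hB
      rw [hrestr B hB u v, hev hB]
    rw [Finset.prod_congr rfl this, Finset.prod_mul_distrib, hsecond v, he u]
    exact congrArg (fun t => t * Φ' v) (prod_fiber_eps P D (fun j => ε j (u j)))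
  -- the inner product identity
  have hoverlap : qInner (fun x => ∏ B ∈ P.parts, φ2 B (fun a => x a.1)) χ
      = qInner Φ' ψt := by
    unfold qInner
    have step1 : (∑ x : ι → ZMod 2,
        (starRingEnd ℂ) (∏ B ∈ P.parts, φ2 B (fun a => x a.1)) * χ x)
        = ∑ u : {a : ι // a ∈ D} → ZMod 2, ∑ v : {a : ι // a ∉ D} → ZMod 2,
          ((starRingEnd ℂ) (e u) * e u) * ((starRingEnd ℂ) (Φ' v) * ψt v) := by
      refine (sum_univ_congr fun x => rfl).trans ((sum_split D _).trans ?_)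
      refine Finset.sum_congr rfl fun u _ => Finset.sum_congr rfl fun v _ => ?_
      rw [hχ, glue_restrD, glue_restrDc, hpoint u v, map_mul]
      ring
    have step2 : (∑ u : {a : ι // a ∈ D} → ZMod 2, ∑ v : {a : ι // a ∉ D} → ZMod 2,
        ((starRingEnd ℂ) (e u) * e u) * ((starRingEnd ℂ) (Φ' v) * ψt v))
        = qInner Φ' ψt := by
      have hms := (Finset.sum_mul_sum Finset.univ Finset.univ
        (fun u : {a : ι // a ∈ D} → ZMod 2 => (starRingEnd ℂ) (e u) * e u)
        (fun v : {a : ι // a ∉ D} → ZMod 2 => (starRingEnd ℂ) (Φ' v) * ψt v)).symm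
      refine hms.trans ?_
      have he1 : (∑ u : {a : ι // a ∈ D} → ZMod 2, (starRingEnd ℂ) (e u) * e u) = 1 := by
        have h1 := eps_conj_sum (J := {a : ι // a ∈ D}) ε hε
        refine Eq.trans ?_ h1
        refine sum_univ_congr fun u => ?_
        rw [he, map_prod, ← Finset.prod_mul_distrib]
      rw [he1, one_mul]
      exact (sum_univ_congr fun v => rfl).symm
    exact ((sum_univ_congr fun x => rfl).trans step1).trans step2
  exact ⟨_, ⟨φ2, hnorm, fun x => rfl⟩, by rw [hoverlap]⟩

end PartII2

section PartII3
variable {ι : Type} [Fintype ι] [DecidableEq ι] (P : Finpartition (Finset.univ : Finset ι))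
  (D : Finset ι)

lemma glue_restr_block {B : Finset ι} (hB : B ∈ P.parts)
    (u : {a : ι // a ∈ D} → ZMod 2) (v : {a : ι // a ∉ D} → ZMod 2) :
    (fun a : {a : ι // a ∈ B} => glue D u v a.1)
      = glueB P D hB (fun i => u i.1) (fun t => v t.1) := by
  funext a
  by_cases h : a.1 ∈ D <;> simp [glue, glueB, h]

lemma part2_le
    (P' : Finpartition (Finset.univ : Finset {a : ι // a ∉ D}))
    (hP' : P'.parts = (P.parts.image (fun B => Finset.subtype (fun a => a ∉ D) B)).filter
      (fun s => s.Nonempty))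
    (ε : {a : ι // a ∈ D} → ZMod 2 → ℂ)
    (hε : ∀ i, ‖ε i 0‖ ^ 2 + ‖ε i 1‖ ^ 2 = 1)
    (e : ({a : ι // a ∈ D} → ZMod 2) → ℂ) (he : ∀ y, e y = ∏ i, ε i (y i))
    (ψt : ({a : ι // a ∉ D} → ZMod 2) → ℂ)
    (χ : (ι → ZMod 2) → ℂ)
    (hχ : ∀ x, χ x = e (fun a => x a.1) * ψt (fun a => x a.1))
    (r : ℝ)
    (hr : r ∈ { s : ℝ | ∃ Φ, IsBlockProductState P Φ ∧ s = ‖qInner Φ χ‖ }) :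
    r ≤ LambdaMaxP P' ψt := by
  obtain ⟨Φ, ⟨φ, hnφ, hformφ⟩, rfl⟩ := hr
  have hbdd' := lambda_set_bddAbove P' ψt
  have hnn : (0:ℝ) ≤ LambdaMaxP P' ψt := lambda_nonneg P' ψt
  -- the contracted block amplitudes
  set θt : (B : Finset ι) →
      ({t : {a : ι // a ∉ D} // t ∈ Finset.subtype (fun a => a ∉ D) B} → ZMod 2) → ℂ :=
    fun B z => if hB : B ∈ P.parts then
      ∑ w : {i : {a : ι // a ∈ D} // P.part i.1 = B} → ZMod 2,
        (∏ i, (starRingEnd ℂ) (ε i.1 (w i))) * φ B (glueB P D hB w z) else 1 with hθt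
  -- the contracted global amplitude
  set Θ : ({a : ι // a ∉ D} → ZMod 2) → ℂ :=
    fun v => ∑ u : {a : ι // a ∈ D} → ZMod 2, (starRingEnd ℂ) (e u) * Φ (glue D u v) with hΘdef
  -- Step A : the overlap contracts
  have hA : qInner Φ χ = qInner Θ ψt := by
    have hmid : (∑ u : {a : ι // a ∈ D} → ZMod 2, ∑ v : {a : ι // a ∉ D} → ZMod 2,
        (starRingEnd ℂ) (Φ (glue D u v)) * χ (glue D u v))
        = ∑ v : {a : ι // a ∉ D} → ZMod 2, (starRingEnd ℂ) (Θ v) * ψt v := by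
      rw [Finset.sum_comm]
      refine Finset.sum_congr rfl fun v _ => ?_
      have hconj : (starRingEnd ℂ) (Θ v)
          = ∑ u : {a : ι // a ∈ D} → ZMod 2, e u * (starRingEnd ℂ) (Φ (glue D u v)) := by
        rw [hΘdef]
        simp only [map_sum, map_mul, Complex.conj_conj]
      rw [hconj, Finset.sum_mul]
      refine Finset.sum_congr rfl fun u _ => ?_
      rw [hχ, glue_restrD, glue_restrDc]
      ring
    unfold qInner
    exact ((sum_univ_congr fun x => rfl).trans ((sum_split D _).trans hmid)).trans
      (sum_univ_congr fun v => rfl)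
  -- Step B : the contracted amplitude factorizes over the blocks
  have hΘ : ∀ v, Θ v = ∏ B ∈ P.parts, θt B (fun t => v t.1) := by
    intro v
    have key := sum_prod_classifier (κ := {a : ι // a ∈ D}) (β := Finset ι) (α := ZMod 2)
      P.parts (fun i => P.part i.1) (fun i => P.part_mem.mpr (Finset.mem_univ i.1))
      (fun B w => if hB : B ∈ P.parts then
        (∏ i, (starRingEnd ℂ) (ε i.1 (w i))) * φ B (glueB P D hB w (fun t => v t.1)) else 1)
    have step1 : Θ v = ∑ u : {a : ι // a ∈ D} → ZMod 2, ∏ B ∈ P.parts,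
        (if hB : B ∈ P.parts then
          (∏ i : {i : {a : ι // a ∈ D} // P.part i.1 = B},
            (starRingEnd ℂ) (ε i.1 (u i.1)))
          * φ B (glueB P D hB (fun i => u i.1) (fun t => v t.1)) else 1) := by
      rw [hΘdef]
      refine Finset.sum_congr rfl fun u _ => ?_
      rw [he, map_prod, hformφ (glue D u v)]
      have h1 : (∏ i : {a : ι // a ∈ D}, (starRingEnd ℂ) (ε i (u i)))
          = ∏ B ∈ P.parts, ∏ i : {i : {a : ι // a ∈ D} // P.part i.1 = B},
              (starRingEnd ℂ) (ε i.1 (u i.1)) :=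
        (prod_fiber_eps P D (fun j => (starRingEnd ℂ) (ε j (u j)))).symm
      rw [h1, ← Finset.prod_mul_distrib]
      refine Finset.prod_congr rfl fun B hB => ?_
      rw [dif_pos hB, glue_restr_block P D hB u v]
    have step2 : (∑ u : {a : ι // a ∈ D} → ZMod 2, ∏ B ∈ P.parts,
        (if hB : B ∈ P.parts then
          (∏ i : {i : {a : ι // a ∈ D} // P.part i.1 = B},
            (starRingEnd ℂ) (ε i.1 (u i.1)))
          * φ B (glueB P D hB (fun i => u i.1) (fun t => v t.1)) else 1))
        = ∏ B ∈ P.parts,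
          ∑ w : {i : {a : ι // a ∈ D} // P.part i.1 = B} → ZMod 2,
            (if hB : B ∈ P.parts then
              (∏ i, (starRingEnd ℂ) (ε i.1 (w i)))
              * φ B (glueB P D hB w (fun t => v t.1)) else 1) := by
      refine Eq.trans ?_ (key.trans ?_)
      · exact sum_univ_congr fun u => rfl
      · exact Finset.prod_congr rfl fun B _ => sum_univ_congr fun w => rfl
    rw [step1, step2]
    refine Finset.prod_congr rfl fun B hB => ?_
    rw [hθt]
    simp only [dif_pos hB]
  -- Step C : each contracted block amplitude has norm at most one
  have hsC : ∀ (B : Finset ι), B ∈ P.parts →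
      (∑ z : {t : {a : ι // a ∉ D} // t ∈ Finset.subtype (fun a => a ∉ D) B} → ZMod 2,
        ‖θt B z‖ ^ 2) ≤ 1 := by
    intro B hB
    have hz_le : ∀ z, ‖θt B z‖ ^ 2
        ≤ ∑ w : {i : {a : ι // a ∈ D} // P.part i.1 = B} → ZMod 2,
            ‖φ B (glueB P D hB w z)‖ ^ 2 := by
      intro z
      have hq : θt B z = qInner (fun w => ∏ i, ε i.1 (w i))
          (fun w => φ B (glueB P D hB w z)) := by
        have hgoal : qInner (fun w : {i : {a : ι // a ∈ D} // P.part i.1 = B} → ZMod 2 =>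
              ∏ i, ε i.1 (w i)) (fun w => φ B (glueB P D hB w z))
            = ∑ w : {i : {a : ι // a ∈ D} // P.part i.1 = B} → ZMod 2,
              (∏ i, (starRingEnd ℂ) (ε i.1 (w i))) * φ B (glueB P D hB w z) := by
          unfold qInner
          refine sum_univ_congr fun w => ?_
          rw [map_prod]
        rw [hθt]
        simp only [dif_pos hB]
        exact hgoal.symm
      have hcs : ‖θt B z‖ ≤ Real.sqrt 1 *
          Real.sqrt (∑ w : {i : {a : ι // a ∈ D} // P.part i.1 = B} → ZMod 2,
            ‖φ B (glueB P D hB w z)‖ ^ 2) := by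
        rw [hq]
        refine le_trans (abs_qInner_le _ _) (le_of_eq ?_)
        refine congrArg₂ (fun a b : ℝ => Real.sqrt a * Real.sqrt b) ?_ ?_
        · have h2 := eps_sq_sum (J := {i : {a : ι // a ∈ D} // P.part i.1 = B})
            (fun i => ε i.1) (fun i => hε i.1)
          refine Eq.trans ?_ h2
          refine sum_univ_congr fun w => ?_
          rw [norm_prod, ← Finset.prod_pow]
        · exact sum_univ_congr fun w => rfl
      rw [Real.sqrt_one, one_mul] at hcs
      have hX : (0:ℝ) ≤ ∑ w : {i : {a : ι // a ∈ D} // P.part i.1 = B} → ZMod 2,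
          ‖φ B (glueB P D hB w z)‖ ^ 2 :=
        Finset.sum_nonneg fun w _ => sq_nonneg _
      have hpow := pow_le_pow_left₀ (norm_nonneg _) hcs 2
      rwa [Real.sq_sqrt hX] at hpow
    calc ∑ z, ‖θt B z‖ ^ 2
        ≤ ∑ z : {t : {a : ι // a ∉ D} // t ∈ Finset.subtype (fun a => a ∉ D) B} → ZMod 2,
          ∑ w : {i : {a : ι // a ∈ D} // P.part i.1 = B} → ZMod 2,
            ‖φ B (glueB P D hB w z)‖ ^ 2 :=
          Finset.sum_le_sum fun z _ => hz_le z
      _ = ∑ w : {i : {a : ι // a ∈ D} // P.part i.1 = B} → ZMod 2,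
          ∑ z : {t : {a : ι // a ∉ D} // t ∈ Finset.subtype (fun a => a ∉ D) B} → ZMod 2,
            ‖φ B (glueB P D hB w z)‖ ^ 2 := Finset.sum_comm
      _ = ∑ y : {a : ι // a ∈ B} → ZMod 2, ‖φ B y‖ ^ 2 :=
          (sum_over_block P D hB (fun y => ‖φ B y‖ ^ 2)).symm
      _ = 1 := hnφ B hB
  rw [hA]
  by_cases hzero : ∃ B, B ∈ P.parts ∧
      (∑ z : {t : {a : ι // a ∉ D} // t ∈ Finset.subtype (fun a => a ∉ D) B} → ZMod 2,
        ‖θt B z‖ ^ 2) = 0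
  · -- degenerate case: the overlap vanishes
    obtain ⟨B, hB, hzB⟩ := hzero
    have hθ0 : ∀ z, θt B z = 0 := by
      intro z
      have := (Finset.sum_eq_zero_iff_of_nonneg (fun z _ => sq_nonneg _)).mp hzB z
        (Finset.mem_univ z)
      have h2 : ‖θt B z‖ = 0 := by
        have := sq_eq_zero_iff.mp this
        exact this
      exact norm_eq_zero.mp h2
    have hΘ0 : ∀ v, Θ v = 0 := by
      intro v
      rw [hΘ v]
      exact Finset.prod_eq_zero hB (hθ0 _)
    have : qInner Θ ψt = 0 := by
      unfold qInner
      refine Finset.sum_eq_zero fun v _ => ?_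
      rw [hΘ0 v, map_zero, zero_mul]
    rw [this, norm_zero]
    exact hnn
  · push_neg at hzero
    -- normalized block amplitudes on the induced partition
    have hex : ∀ B' ∈ P'.parts,
        ∃ (g : ({t : {a : ι // a ∉ D} // t ∈ B'} → ZMod 2) → ℂ) (c : ℝ),
          0 ≤ c ∧ c ≤ 1 ∧
          (∑ z : {t : {a : ι // a ∉ D} // t ∈ B'} → ZMod 2, ‖g z‖ ^ 2) = 1 ∧
          ∀ (B : Finset ι), B ∈ P.parts → Finset.subtype (fun a => a ∉ D) B = B' →
            ∀ (v : {a : ι // a ∉ D} → ZMod 2),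
              θt B (fun t => v t.1) = (c : ℂ) * g (fun t => v t.1) := by
      intro B' hB'
      rw [hP'] at hB'
      obtain ⟨hB'img, hB'ne⟩ := Finset.mem_filter.mp hB'
      obtain ⟨B₀, hB₀, rfl⟩ := Finset.mem_image.mp hB'img
      set s : ℝ := ∑ z : {t : {a : ι // a ∉ D} //
        t ∈ Finset.subtype (fun a => a ∉ D) B₀} → ZMod 2, ‖θt B₀ z‖ ^ 2 with hs
      have hs0 : 0 < s := by
        rcases lt_or_eq_of_le (Finset.sum_nonneg fun z _ => sq_nonneg
          (‖θt B₀ z‖)) with h | h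
        · exact h
        · exact absurd h.symm (hzero B₀ hB₀)
      have hs1 : s ≤ 1 := hsC B₀ hB₀
      have hc0 : (0:ℝ) < Real.sqrt s := Real.sqrt_pos.mpr hs0
      refine ⟨fun z => θt B₀ z / (Real.sqrt s : ℝ), Real.sqrt s, Real.sqrt_nonneg s,
        Real.sqrt_le_one.mpr hs1, ?_, ?_⟩
      · have : ∀ z, ‖θt B₀ z / (Real.sqrt s : ℝ)‖ ^ 2
            = ‖θt B₀ z‖ ^ 2 / s := by
          intro z
          rw [norm_div, div_pow, Complex.norm_real, Real.norm_eq_abs, abs_of_nonneg (Real.sqrt_nonneg s),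
            Real.sq_sqrt hs0.le]
        rw [Finset.sum_congr rfl fun z _ => this z, ← Finset.sum_div, ← hs,
          div_self hs0.ne']
      · intro B hB hBB' v
        have hBne : (Finset.subtype (fun a => a ∉ D) B).Nonempty := by
          rw [hBB']; exact hB'ne
        have hBeq : B = B₀ := subtype_injOn P D B hB B₀ hB₀ hBne hBB'
        subst hBeq
        rw [mul_div_cancel₀]
        exact_mod_cast hc0.ne'
    choose g c hc0 hc1 hgnorm hgrel using hex
    -- total versions
    set φ'' : (B' : Finset {a : ι // a ∉ D}) →
        (({t : {a : ι // a ∉ D} // t ∈ B'} → ZMod 2) → ℂ) :=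
      fun B' => if h : B' ∈ P'.parts then g B' h else fun _ => 0 with hφ''
    set ct : Finset {a : ι // a ∉ D} → ℝ :=
      fun B' => if h : B' ∈ P'.parts then c B' h else 1 with hct
    have hct0 : ∀ B', 0 ≤ ct B' := by
      intro B'
      rw [hct]
      by_cases h : B' ∈ P'.parts
      · simp only [dif_pos h]; exact hc0 B' h
      · simp only [dif_neg h]; exact zero_le_one
    have hct1 : ∀ B', ct B' ≤ 1 := by
      intro B'
      rw [hct]
      by_cases h : B' ∈ P'.parts
      · simp only [dif_pos h]; exact hc1 B' h
      · simp only [dif_neg h]; exact le_rfl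
    set Φ' : ({a : ι // a ∉ D} → ZMod 2) → ℂ :=
      fun v => ∏ B' ∈ P'.parts, φ'' B' (fun t => v t.1) with hΦ'
    have hbps' : IsBlockProductState P' Φ' := by
      refine ⟨φ'', fun B' hB' => ?_, fun v => rfl⟩
      rw [hφ'']
      simp only [dif_pos hB']
      exact hgnorm B' hB'
    -- the factorization  Θ = const • Φ'
    have hmemP' : ∀ B ∈ P.parts, (Finset.subtype (fun a => a ∉ D) B).Nonempty →
        Finset.subtype (fun a => a ∉ D) B ∈ P'.parts := by
      intro B hB hne
      rw [hP']
      exact Finset.mem_filter.mpr ⟨Finset.mem_image_of_mem _ hB, hne⟩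
    have hrel : ∀ B ∈ P.parts, (Finset.subtype (fun a => a ∉ D) B).Nonempty →
        ∀ v : {a : ι // a ∉ D} → ZMod 2, θt B (fun t => v t.1)
          = (ct (Finset.subtype (fun a => a ∉ D) B) : ℂ)
            * φ'' (Finset.subtype (fun a => a ∉ D) B) (fun t => v t.1) := by
      intro B hB hne v
      have hmem := hmemP' B hB hne
      rw [hct, hφ'']
      simp only [dif_pos hmem]
      exact hgrel _ hmem B hB rfl v
    set C0 : ℂ := ∏ B ∈ P.parts.filter
        (fun B => ¬ (Finset.subtype (fun a => a ∉ D) B).Nonempty),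
        θt B (fun _ => 0) with hC0
    set C1 : ℂ := ∏ B ∈ P.parts.filter
        (fun B => (Finset.subtype (fun a => a ∉ D) B).Nonempty),
        (ct (Finset.subtype (fun a => a ∉ D) B) : ℂ) with hC1
    have hfactor : ∀ v, Θ v = (C0 * C1) * Φ' v := by
      intro v
      rw [hΘ v, ← Finset.prod_filter_mul_prod_filter_not P.parts
        (fun B => (Finset.subtype (fun a => a ∉ D) B).Nonempty)]
      have hpos : (∏ B ∈ P.parts.filter
          (fun B => (Finset.subtype (fun a => a ∉ D) B).Nonempty), θt B (fun t => v t.1))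
          = C1 * Φ' v := by
        have h1 : ∀ B ∈ P.parts.filter
            (fun B => (Finset.subtype (fun a => a ∉ D) B).Nonempty),
            θt B (fun t => v t.1)
              = (ct (Finset.subtype (fun a => a ∉ D) B) : ℂ)
                * φ'' (Finset.subtype (fun a => a ∉ D) B) (fun t => v t.1) := by
          intro B hBf
          have h := Finset.mem_filter.mp hBf
          exact hrel B h.1 h.2 v
        rw [Finset.prod_congr rfl h1, Finset.prod_mul_distrib, hC1]
        congr 1
        have himg : (P.parts.filter
            (fun B => (Finset.subtype (fun a => a ∉ D) B).Nonempty)).image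
              (fun B => Finset.subtype (fun a => a ∉ D) B) = P'.parts := by
          rw [hP', Finset.filter_image]
        have hinj : ∀ B₁ ∈ P.parts.filter
              (fun B => (Finset.subtype (fun a => a ∉ D) B).Nonempty),
            ∀ B₂ ∈ P.parts.filter
              (fun B => (Finset.subtype (fun a => a ∉ D) B).Nonempty),
            Finset.subtype (fun a => a ∉ D) B₁ = Finset.subtype (fun a => a ∉ D) B₂ →
              B₁ = B₂ := by
          intro B₁ h₁ B₂ h₂ heq
          have h₁' := Finset.mem_filter.mp h₁
          have h₂' := Finset.mem_filter.mp h₂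
          exact subtype_injOn P D B₁ h₁'.1 B₂ h₂'.1 h₁'.2 heq
        calc (∏ B ∈ P.parts.filter
              (fun B => (Finset.subtype (fun a => a ∉ D) B).Nonempty),
              φ'' (Finset.subtype (fun a => a ∉ D) B) (fun t => v t.1))
            = ∏ B' ∈ (P.parts.filter
                (fun B => (Finset.subtype (fun a => a ∉ D) B).Nonempty)).image
                  (fun B => Finset.subtype (fun a => a ∉ D) B),
                φ'' B' (fun t => v t.1) :=
              (Finset.prod_image (f := fun B' : Finset {a : ι // a ∉ D} =>
                φ'' B' (fun t => v t.1)) hinj).symm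
          _ = ∏ B' ∈ P'.parts, φ'' B' (fun t => v t.1) := by rw [himg]
          _ = Φ' v := rfl
      have hneg : (∏ B ∈ P.parts.filter
          (fun B => ¬ (Finset.subtype (fun a => a ∉ D) B).Nonempty), θt B (fun t => v t.1))
          = C0 := by
        rw [hC0]
        refine Finset.prod_congr rfl fun B hBf => ?_
        have h := Finset.mem_filter.mp hBf
        haveI : IsEmpty {t : {a : ι // a ∉ D} // t ∈ Finset.subtype (fun a => a ∉ D) B} :=
          ⟨fun t => h.2 ⟨t.1, t.2⟩⟩
        exact congrArg (θt B) (Subsingleton.elim _ _)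
      rw [hpos, hneg]
      ring
    -- bounding the constant
    have habsC0 : ‖C0‖ ≤ 1 := by
      rw [hC0, norm_prod]
      refine Finset.prod_le_one (f := fun B => ‖θt B (fun _ => 0)‖)
        (fun B _ => norm_nonneg _) ?_
      intro B hBf
      have h := Finset.mem_filter.mp hBf
      have hsum := hsC B h.1
      have hle : ‖θt B (fun _ => 0)‖ ^ 2 ≤ 1 := by
        refine le_trans ?_ hsum
        exact Finset.single_le_sum
          (f := fun z : {t : {a : ι // a ∉ D} // t ∈ Finset.subtype (fun a => a ∉ D) B} →
            ZMod 2 => ‖θt B z‖ ^ 2)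
          (fun z _ => sq_nonneg _) (Finset.mem_univ _)
      nlinarith [norm_nonneg (θt B (fun _ => (0:ZMod 2)))]
    have habsC1 : ‖C1‖ ≤ 1 := by
      rw [hC1, norm_prod]
      refine Finset.prod_le_one
        (f := fun B => ‖((ct (Finset.subtype (fun a => a ∉ D) B) : ℝ) : ℂ)‖)
        (fun B _ => norm_nonneg _) ?_
      intro B _
      simp only [Complex.norm_real, Real.norm_eq_abs]
      rw [abs_of_nonneg (hct0 _)]
      exact hct1 _
    -- conclusion
    have hq : qInner Θ ψt = (starRingEnd ℂ) (C0 * C1) * qInner Φ' ψt := by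
      unfold qInner
      rw [Finset.mul_sum]
      refine Finset.sum_congr rfl fun v _ => ?_
      rw [hfactor v, map_mul]
      ring
    rw [hq, norm_mul]
    have hmem : ‖qInner Φ' ψt‖ ∈
        { s : ℝ | ∃ Φ', IsBlockProductState P' Φ' ∧ s = ‖qInner Φ' ψt‖ } :=
      ⟨Φ', hbps', rfl⟩
    have hle' : ‖qInner Φ' ψt‖ ≤ LambdaMaxP P' ψt := le_csSup hbdd' hmem
    have habs : ‖(starRingEnd ℂ) (C0 * C1)‖ ≤ 1 := by
      rw [Complex.norm_conj, norm_mul]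
      exact mul_le_one₀ habsC0 (norm_nonneg _) habsC1
    calc ‖(starRingEnd ℂ) (C0 * C1)‖ * ‖qInner Φ' ψt‖
        ≤ 1 * ‖qInner Φ' ψt‖ :=
          mul_le_mul_of_nonneg_right habs (norm_nonneg _)
      _ = ‖qInner Φ' ψt‖ := one_mul _
      _ ≤ LambdaMaxP P' ψt := hle'

end PartII3

/-- (i) a unitary factorizing as a tensor product of unitaries acting
inside the blocks of `P` does not change the maximal block overlap; (ii) if moreover it
disentangles the qubits of a subset `D` (leaving a product of single-qubit unit vectors
on `D` tensored with a state `ψt` on the complement), then the maximal block overlap of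
`ψ` with respect to `P` equals that of `ψt` with respect to the induced partition `P'`
of the remaining qubits. -/
theorem geometric_entanglement_block_disentangling
    {ι : Type} [Fintype ι] [DecidableEq ι]
    (P : Finpartition (Finset.univ : Finset ι))
    (ψ : (ι → ZMod 2) → ℂ) (hψ : IsState ψ)
    (M : (ι → ZMod 2) → (ι → ZMod 2) → ℂ)
    (hM : Matrix.of M ∈ Matrix.unitaryGroup (ι → ZMod 2) ℂ)
    (UB : (B : Finset ι) → ({ a : ι // a ∈ B } → ZMod 2) → ({ a : ι // a ∈ B } → ZMod 2) → ℂ)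
    (hUB : ∀ B ∈ P.parts,
      Matrix.of (UB B) ∈ Matrix.unitaryGroup ({ a : ι // a ∈ B } → ZMod 2) ℂ)
    (hfact : ∀ x y, M x y = ∏ B ∈ P.parts, UB B (fun a => x a.1) (fun a => y a.1))
    (Uψ : (ι → ZMod 2) → ℂ)
    (hUψ : ∀ x, Uψ x = ∑ y : ι → ZMod 2, M x y * ψ y) :
    LambdaMaxP P Uψ = LambdaMaxP P ψ ∧
    (∀ (D : Finset ι) (e : ({ a : ι // a ∈ D } → ZMod 2) → ℂ)
        (ψt : ({ a : ι // a ∉ D } → ZMod 2) → ℂ)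
        (P' : Finpartition (Finset.univ : Finset { a : ι // a ∉ D })),
      (∃ ε : { a : ι // a ∈ D } → ZMod 2 → ℂ,
          (∀ i, ‖ε i 0‖ ^ 2 + ‖ε i 1‖ ^ 2 = 1) ∧
          ∀ y, e y = ∏ i, ε i (y i)) →
      IsState ψt →
      (∀ x, Uψ x = e (fun a => x a.1) * ψt (fun a => x a.1)) →
      P'.parts =
        (P.parts.image (fun B => Finset.subtype (fun a => a ∉ D) B)).filter
          (fun s => s.Nonempty) →
      LambdaMaxP P ψ = LambdaMaxP P' ψt) := by
  have hpart1 : LambdaMaxP P Uψ = LambdaMaxP P ψ :=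
    lambda_unitary P ψ M hM UB hUB hfact Uψ hUψ
  refine ⟨hpart1, ?_⟩
  intro D e ψt P' hεe hψt hUψe hP'
  obtain ⟨ε, hε, he⟩ := hεe
  rw [← hpart1]
  apply le_antisymm
  · refine csSup_le (lambda_set_nonempty P Uψ) ?_
    intro r hrS
    exact part2_le P D P' hP' ε hε e he ψt Uψ hUψe r hrS
  · refine csSup_le (lambda_set_nonempty P' ψt) ?_
    intro r hr
    exact le_csSup (lambda_set_bddAbove P Uψ) (part2_ge P D P' hP' ε hε e he ψt Uψ hUψe r hr)


end GeomEnt
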